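/- arXiv:2402.02407 — 6 statements merged into one kernel-verified Lean document; each statement's English description precedes it below -/
import Mathlib

section
/- For any bounded convex polytope C ⊆ ℝᵈ enclosed by m hyperplanes and any ε > 0, there exists a two-layer ReLU network N(x) = v₀ + Σₖ₌₁ᵐ vₖ·ReLU(wₖᵀx + bₖ) with m hidden neurons such that N(x) = 1 for all x ∈ C, N(x) < 1 for all x ∉ C, and N(x) < 0 for all x outside the ε-neighborhood of C. -/
open MeasureTheory Metric Set

/-- For any bounded convex polytope `C ⊆ ℝ^d` given by `m` half-spaces and any `ε > 0`
there is a two-layer ReLU network with `m` hidden neurons equal to `1` on `C`,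
`< 1` off `C`, and `< 0` outside the `ε`-neighborhood of `C`. -/
theorem two_layer_relu_network_for_polytope
    (d m : ℕ)
    (w : Fin m → EuclideanSpace ℝ (Fin d)) (b : Fin m → ℝ)
    (C : Set (EuclideanSpace ℝ (Fin d)))
    (hC : C = ⋂ k, {x | (inner ℝ (w k) x : ℝ) + b k ≤ 0})
    (hCbdd : Bornology.IsBounded C)
    (hCint : (interior C).Nonempty)
    (ε : ℝ) (hε : 0 < ε) :
    ∃ (N : EuclideanSpace ℝ (Fin d) → ℝ) (v₀ : ℝ) (v : Fin m → ℝ)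
      (w' : Fin m → EuclideanSpace ℝ (Fin d)) (b' : Fin m → ℝ),
      (∀ x, N x = v₀ + ∑ k, v k * max ((inner ℝ (w' k) x : ℝ) + b' k) 0) ∧
      (∀ x ∈ C, N x = 1) ∧
      (∀ x ∉ C, N x < 1) ∧
      (∀ x ∉ Metric.thickening ε C, N x < 0) := by
  classical
  -- membership criterion
  have hmem : ∀ x, x ∈ C ↔ ∀ k, (inner ℝ (w k) x : ℝ) + b k ≤ 0 := by
    intro x; rw [hC]; simp [Set.mem_iInter]
  -- interior ball
  obtain ⟨x₀, hx₀⟩ := hCint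
  rw [mem_interior_iff_mem_nhds, Metric.mem_nhds_iff] at hx₀
  obtain ⟨r', hr', hballC⟩ := hx₀
  obtain ⟨r, hr, hball'⟩ : ∃ r : ℝ, 0 < r ∧ Metric.closedBall x₀ r ⊆ C :=
    ⟨r' / 2, by positivity,
      (Metric.closedBall_subset_ball (by linarith)).trans hballC⟩
  have hx₀C : x₀ ∈ C := hball' (Metric.mem_closedBall_self hr.le)
  -- key inequality at the center
  have hcenter : ∀ k, (inner ℝ (w k) x₀ : ℝ) + b k ≤ -(r * ‖w k‖) := by
    intro k
    by_cases hw : w k = 0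
    · simpa [hw] using (hmem x₀).mp hx₀C k
    · have hwn : (0:ℝ) < ‖w k‖ := norm_pos_iff.mpr hw
      set u : EuclideanSpace ℝ (Fin d) := x₀ + (r / ‖w k‖) • (w k) with hu
      have huC : u ∈ C := by
        apply hball'
        rw [Metric.mem_closedBall, dist_eq_norm]
        have : u - x₀ = (r / ‖w k‖) • (w k) := by rw [hu]; abel
        rw [this, norm_smul]
        rw [Real.norm_eq_abs, abs_of_pos (by positivity)]
        field_simp; rfl
      have := (hmem u).mp huC k
      rw [hu, inner_add_right, real_inner_smul_right, real_inner_self_eq_norm_sq] at this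
      have hcalc : r / ‖w k‖ * ‖w k‖ ^ 2 = r * ‖w k‖ := by
        field_simp
      nlinarith [this]
  -- bound on C
  obtain ⟨D₀, hD₀⟩ := hCbdd.subset_closedBall x₀
  obtain ⟨D, hD, hDC⟩ : ∃ D : ℝ, 0 < D ∧ ∀ z ∈ C, ‖z - x₀‖ ≤ D := by
    refine ⟨max D₀ r, lt_of_lt_of_le hr (le_max_right _ _), ?_⟩
    intro z hz
    have := hD₀ hz
    rw [Metric.mem_closedBall, dist_eq_norm] at this
    exact this.trans (le_max_left _ _)
  -- ρ : lower bound on norms of nonzero w k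
  obtain ⟨ρ, hρpos, hρle⟩ :
      ∃ ρ : ℝ, 0 < ρ ∧ ∀ k, w k ≠ 0 → ρ ≤ ‖w k‖ := by
    set S : Finset ℝ :=
      insert 1 ((Finset.univ.filter (fun k => w k ≠ 0)).image (fun k => ‖w k‖)) with hS
    have hSne : S.Nonempty := ⟨1, by simp [hS]⟩
    have hpos : ∀ a ∈ S, 0 < a := by
      intro a ha
      rw [hS] at ha
      simp only [Finset.mem_insert, Finset.mem_image, Finset.mem_filter] at ha
      rcases ha with h | ⟨k, ⟨_, hk⟩, hk2⟩
      · rw [h]; norm_num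
      · rw [← hk2]; exact norm_pos_iff.mpr hk
    refine ⟨S.min' hSne, hpos _ (S.min'_mem hSne), ?_⟩
    · intro k hk
      apply S.min'_le
      rw [hS]
      simp only [Finset.mem_insert, Finset.mem_image, Finset.mem_filter]
      exact Or.inr ⟨k, ⟨Finset.mem_univ k, hk⟩, rfl⟩
  -- the margin δ
  obtain ⟨δ, hδ, hδdef⟩ : ∃ δ : ℝ, 0 < δ ∧ δ = ε * r * ρ / (2 * D) :=
    ⟨ε * r * ρ / (2 * D), by positivity, rfl⟩
  -- Claim A: if all constraints are ≤ δ, then x is ε-close to C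
  have claimA : ∀ x : EuclideanSpace ℝ (Fin d),
      (∀ k, (inner ℝ (w k) x : ℝ) + b k ≤ δ) → ∃ z ∈ C, dist x z < ε := by
    intro x hx
    have hrρ : 0 < r * ρ := by positivity
    have hden : 0 < δ + r * ρ := by positivity
    obtain ⟨l, hl⟩ : ∃ l : ℝ, l = r * ρ / (δ + r * ρ) := ⟨_, rfl⟩
    have hl0 : 0 < l := by rw [hl]; positivity
    have hl1 : l < 1 := by
      rw [hl, div_lt_one hden]; linarith
    have h1l : 1 - l = δ / (δ + r * ρ) := by
      rw [hl]; field_simp; ring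
    set z : EuclideanSpace ℝ (Fin d) := x₀ + l • (x - x₀) with hz
    have hinnz : ∀ k, (inner ℝ (w k) z : ℝ)
        = inner ℝ (w k) x₀ + l * (inner ℝ (w k) x - inner ℝ (w k) x₀) := by
      intro k
      rw [hz, inner_add_right, real_inner_smul_right, inner_sub_right]
    have hzC : z ∈ C := by
      rw [hmem]
      intro k
      by_cases hw : w k = 0
      · have := (hmem x₀).mp hx₀C k
        rw [hinnz k]
        simp only [hw, inner_zero_left] at this ⊢
        simpa using this
      · have hwn : (0:ℝ) < ‖w k‖ := norm_pos_iff.mpr hw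
        have hρw : ρ ≤ ‖w k‖ := hρle k hw
        have h1 := hx k
        have h2 := hcenter k
        rw [hinnz k]
        have key : (inner ℝ (w k) x₀ : ℝ) + l * (inner ℝ (w k) x - inner ℝ (w k) x₀) + b k
            = l * ((inner ℝ (w k) x : ℝ) + b k) + (1 - l) * ((inner ℝ (w k) x₀ : ℝ) + b k) := by
          ring
        rw [key]
        have hle1 : l * ((inner ℝ (w k) x : ℝ) + b k) ≤ l * δ :=
          mul_le_mul_of_nonneg_left h1 hl0.le
        have hle2 : (1 - l) * ((inner ℝ (w k) x₀ : ℝ) + b k) ≤ (1 - l) * (-(r * ‖w k‖)) :=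
          mul_le_mul_of_nonneg_left h2 (by linarith)
        have hbal : l * δ ≤ (1 - l) * (r * ‖w k‖) := by
          have hnum : r * ρ * δ ≤ δ * (r * ‖w k‖) := by
            nlinarith [mul_le_mul_of_nonneg_left hρw (mul_nonneg hr.le hδ.le)]
          calc l * δ = r * ρ * δ / (δ + r * ρ) := by rw [hl]; ring
            _ ≤ δ * (r * ‖w k‖) / (δ + r * ρ) := by gcongr
            _ = (1 - l) * (r * ‖w k‖) := by rw [h1l]; ring
        linarith
    refine ⟨z, hzC, ?_⟩
    have hxz : x - z = (1 - l) • (x - x₀) := by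
      rw [hz, sub_smul, one_smul]; abel
    have hzx₀ : z - x₀ = l • (x - x₀) := by rw [hz]; abel
    have hnorm1 : ‖z - x₀‖ = l * ‖x - x₀‖ := by
      rw [hzx₀, norm_smul, Real.norm_eq_abs, abs_of_pos hl0]
    have hnormD : l * ‖x - x₀‖ ≤ D := by
      rw [← hnorm1]; exact hDC z hzC
    rw [dist_eq_norm, hxz, norm_smul, Real.norm_eq_abs,
      abs_of_pos (by linarith : (0:ℝ) < 1 - l)]
    have hnn : 0 ≤ ‖x - x₀‖ := norm_nonneg _
    have h3 : (1 - l) * ‖x - x₀‖ ≤ (1 - l) / l * D := by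
      rw [div_mul_eq_mul_div, le_div_iff₀ hl0]
      nlinarith
    have h4 : (1 - l) / l * D = ε / 2 := by
      have hquot : (1 - l) / l = δ / (r * ρ) := by
        rw [h1l, hl, div_div_div_cancel_right₀]
        exact hden.ne'
      rw [hquot, hδdef]
      field_simp
    linarith
  -- the network
  refine ⟨fun x => 1 - ∑ k, (2 / δ) * max ((inner ℝ (w k) x : ℝ) + b k) 0,
    1, fun _ => -(2 / δ), w, b, ?_, ?_, ?_, ?_⟩
  · intro x
    show (1:ℝ) - ∑ k, (2 / δ) * max ((inner ℝ (w k) x : ℝ) + b k) 0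
      = 1 + ∑ k, -(2 / δ) * max ((inner ℝ (w k) x : ℝ) + b k) 0
    simp only [neg_mul, Finset.sum_neg_distrib]
    ring
  · intro x hx
    show (1:ℝ) - ∑ k, (2 / δ) * max ((inner ℝ (w k) x : ℝ) + b k) 0 = 1
    have hzero : ∑ k, (2 / δ) * max ((inner ℝ (w k) x : ℝ) + b k) 0 = 0 :=
      Finset.sum_eq_zero fun k _ => by
        rw [max_eq_right ((hmem x).mp hx k), mul_zero]
    rw [hzero, sub_zero]
  · intro x hx
    show (1:ℝ) - ∑ k, (2 / δ) * max ((inner ℝ (w k) x : ℝ) + b k) 0 < 1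
    have hnn : ∀ k ∈ Finset.univ, 0 ≤ (2 / δ) * max ((inner ℝ (w k) x : ℝ) + b k) 0 :=
      fun k _ => mul_nonneg (by positivity) (le_max_right _ _)
    obtain ⟨k, hk⟩ : ∃ k, 0 < (inner ℝ (w k) x : ℝ) + b k := by
      by_contra h
      push_neg at h
      exact hx ((hmem x).mpr fun k => (h k))
    have hterm : 0 < (2 / δ) * max ((inner ℝ (w k) x : ℝ) + b k) 0 := by
      apply mul_pos (by positivity)
      rw [max_eq_left hk.le]; exact hk
    have hsum : 0 < ∑ k, (2 / δ) * max ((inner ℝ (w k) x : ℝ) + b k) 0 :=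
      lt_of_lt_of_le hterm (Finset.single_le_sum hnn (Finset.mem_univ k))
    linarith
  · intro x hx
    show (1:ℝ) - ∑ k, (2 / δ) * max ((inner ℝ (w k) x : ℝ) + b k) 0 < 0
    obtain ⟨k, hk⟩ : ∃ k, δ < (inner ℝ (w k) x : ℝ) + b k := by
      by_contra h
      push_neg at h
      obtain ⟨z, hzC, hzd⟩ := claimA x h
      exact hx (Metric.mem_thickening_iff.mpr ⟨z, hzC, hzd⟩)
    have hnn : ∀ j ∈ Finset.univ, 0 ≤ (2 / δ) * max ((inner ℝ (w j) x : ℝ) + b j) 0 :=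
      fun j _ => mul_nonneg (by positivity) (le_max_right _ _)
    have hterm : 2 ≤ (2 / δ) * max ((inner ℝ (w k) x : ℝ) + b k) 0 := by
      rw [max_eq_left (by linarith : (0:ℝ) ≤ (inner ℝ (w k) x : ℝ) + b k)]
      rw [div_mul_eq_mul_div, le_div_iff₀ hδ]
      nlinarith
    have hsum : 2 ≤ ∑ j, (2 / δ) * max ((inner ℝ (w j) x : ℝ) + b j) 0 :=
      hterm.trans (Finset.single_le_sum hnn (Finset.mem_univ k))
    linarith
end

section
/- Let 0 ≤ m ≤ d and let Δᵐ be an m-simplex in ℝᵈ. For every ε > 0 there exists a two-layer ReLU network T: ℝᵈ → ℝ with d+1 hidden neurons such that T(x) = 1 for all x ∈ Δᵐ, T(x) ≤ 1 for all x in the ε-neighborhood of Δᵐ, and T(x) < 0 for all x outside the ε-neighborhood of Δᵐ. -/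
open Set Metric

open Module in

/-- Extend an affinely independent family to an affine basis whose points all lie in the
`ε`-thickening of the convex hull of the original family. -/
lemma exists_affineBasis_extension
    (d m : ℕ) (hm : m ≤ d)
    (pts : Fin (m + 1) → EuclideanSpace ℝ (Fin d))
    (hpts : AffineIndependent ℝ pts)
    (ε : ℝ) (hε : 0 < ε) :
    ∃ B : AffineBasis (Fin (d + 1)) ℝ (EuclideanSpace ℝ (Fin d)),
      Set.range pts ⊆ Set.range ⇑B ∧
      Set.range ⇑B ⊆ Metric.thickening ε (convexHull ℝ (Set.range pts)) := by
  classical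
  have hvs : LinearIndependent ℝ
      (fun i : {x : Fin (m+1) // x ≠ 0} => pts i - pts 0) := by
    have := (affineIndependent_iff_linearIndependent_vsub ℝ pts 0).mp hpts
    simpa using this
  set W : Submodule ℝ (EuclideanSpace ℝ (Fin d)) :=
    Submodule.span ℝ (Set.range fun i : {x : Fin (m+1) // x ≠ 0} => pts i - pts 0) with hW
  obtain ⟨W', hWc⟩ := Submodule.exists_isCompl W
  set nW := finrank ℝ W' with hnW
  have hcardsub : Fintype.card {x : Fin (m+1) // x ≠ 0} = m := by
    simp
  have hfrW : finrank ℝ W = m := by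
    rw [hW, finrank_span_eq_card hvs, hcardsub]
  have hsum : m + nW = d := by
    have := Submodule.finrank_add_eq_of_isCompl hWc
    rw [hfrW, finrank_euclideanSpace_fin] at this
    omega
  -- basis of the complement, normalized to have norm ε/2
  set cb := Module.finBasis ℝ W' with hcb
  set c : Fin nW → EuclideanSpace ℝ (Fin d) := fun j => (cb j : EuclideanSpace ℝ (Fin d)) with hc
  have hcmem : ∀ j, c j ∈ W' := fun j => (cb j).2
  have hcne : ∀ j, c j ≠ 0 := by
    intro j h
    exact cb.ne_zero j (Subtype.ext h)
  have hcLI : LinearIndependent ℝ c := by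
    have := cb.linearIndependent
    exact this.map' W'.subtype (Submodule.ker_subtype W')
  set u : Fin nW → EuclideanSpace ℝ (Fin d) :=
    fun j => (ε / (2 * ‖c j‖)) • c j with hu
  have hcnorm : ∀ j, 0 < ‖c j‖ := fun j => norm_pos_iff.mpr (hcne j)
  have hscale_ne : ∀ j, (ε / (2 * ‖c j‖)) ≠ 0 := by
    intro j
    have := hcnorm j
    positivity
  have huLI : LinearIndependent ℝ u := by
    have := hcLI.units_smul (fun j => Units.mk0 _ (hscale_ne j))
    convert this using 1
    funext j
    simp [hu, Units.smul_def]
  have humem : ∀ j, u j ∈ W' := fun j => W'.smul_mem _ (hcmem j)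
  have hunorm : ∀ j, ‖u j‖ = ε / 2 := by
    intro j
    have hms := (hcnorm j).ne'
    rw [hu, norm_smul, Real.norm_eq_abs, abs_of_pos (by have := hcnorm j; positivity)]
    field_simp
  -- the extended family
  set q : (Fin (m+1) ⊕ Fin nW) → EuclideanSpace ℝ (Fin d) :=
    Sum.elim pts (fun j => pts 0 + u j) with hq
  -- equiv for the subtype index
  set E0 : ({x : Fin (m+1) // x ≠ 0} ⊕ Fin nW) ≃ {x : Fin (m+1) ⊕ Fin nW // x ≠ Sum.inl 0} :=
    { toFun := Sum.elim (fun j => ⟨Sum.inl j.1, by simp [j.2]⟩) (fun j => ⟨Sum.inr j, by simp⟩)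
      invFun := fun i => match i with
        | ⟨Sum.inl j, h⟩ => Sum.inl ⟨j, fun hj => h (by simp [hj])⟩
        | ⟨Sum.inr j, _⟩ => Sum.inr j
      left_inv := by rintro (⟨j, hj⟩ | j) <;> rfl
      right_inv := by rintro ⟨(j | j), h⟩ <;> rfl } with hE0
  have hqind : AffineIndependent ℝ q := by
    rw [affineIndependent_iff_linearIndependent_vsub ℝ q (Sum.inl 0)]
    have hdisj : Disjoint
        (Submodule.span ℝ (Set.range fun i : {x : Fin (m+1) // x ≠ 0} => pts i - pts 0))
        (Submodule.span ℝ (Set.range u)) := by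
      refine hWc.disjoint.mono ?_ ?_
      · rw [hW]
      · rw [Submodule.span_le]
        rintro _ ⟨j, rfl⟩
        exact humem j
    have hsumLI : LinearIndependent ℝ
        (Sum.elim (fun i : {x : Fin (m+1) // x ≠ 0} => pts i - pts 0) u) :=
      hvs.sum_type huLI hdisj
    have hcomp : (fun i : {x : Fin (m+1) ⊕ Fin nW // x ≠ Sum.inl 0} =>
        (q i -ᵥ q (Sum.inl 0) : EuclideanSpace ℝ (Fin d))) ∘ E0 =
        Sum.elim (fun i : {x : Fin (m+1) // x ≠ 0} => pts i - pts 0) u := by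
      funext i
      rcases i with (⟨j, hj⟩ | j) <;> simp [hq, hE0]
    exact (linearIndependent_equiv E0).mp (hcomp ▸ hsumLI)
  have hqspan : affineSpan ℝ (Set.range q) = ⊤ := by
    rw [hqind.affineSpan_eq_top_iff_card_eq_finrank_add_one]
    simp [finrank_euclideanSpace_fin]
    omega
  set B0 : AffineBasis (Fin (m+1) ⊕ Fin nW) ℝ (EuclideanSpace ℝ (Fin d)) :=
    ⟨q, hqind, hqspan⟩ with hB0
  have hcard : Fintype.card (Fin (m+1) ⊕ Fin nW) = Fintype.card (Fin (d+1)) := by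
    simp; omega
  set eι := Fintype.equivOfCardEq hcard with heι
  refine ⟨B0.reindex eι, ?_, ?_⟩
  · have hrange : Set.range ⇑(B0.reindex eι) = Set.range q := by
      rw [AffineBasis.coe_reindex]
      exact eι.symm.surjective.range_comp q
    rw [hrange]
    rintro _ ⟨j, rfl⟩
    exact ⟨Sum.inl j, rfl⟩
  · have hrange : Set.range ⇑(B0.reindex eι) = Set.range q := by
      rw [AffineBasis.coe_reindex]
      exact eι.symm.surjective.range_comp q
    rw [hrange]
    rintro _ ⟨i, rfl⟩
    rcases i with j | j
    · exact self_subset_thickening hε _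
        (subset_convexHull ℝ _ (Set.mem_range_self j))
    · rw [Metric.mem_thickening_iff]
      refine ⟨pts 0, subset_convexHull ℝ _ (Set.mem_range_self 0), ?_⟩
      have : dist (q (Sum.inr j)) (pts 0) = ‖u j‖ := by
        rw [hq]
        simp [dist_eq_norm]
      rw [this, hunorm j]
      linarith

/-- For an `m`-simplex `Δ^m` in `ℝ^d` (`m ≤ d`) and `ε > 0`, there is a two-layer ReLU
network with `d+1` hidden neurons equal to `1` on the simplex, `≤ 1` on its
`ε`-neighborhood, and `< 0` outside the `ε`-neighborhood. -/
theorem two_layer_network_for_simplex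
    (d m : ℕ) (hm : m ≤ d)
    (pts : Fin (m + 1) → EuclideanSpace ℝ (Fin d))
    (hpts : AffineIndependent ℝ pts)
    (ε : ℝ) (hε : 0 < ε) :
    ∃ (T : EuclideanSpace ℝ (Fin d) → ℝ) (v₀ : ℝ) (v : Fin (d + 1) → ℝ)
      (w : Fin (d + 1) → EuclideanSpace ℝ (Fin d)) (b : Fin (d + 1) → ℝ),
      (∀ x, T x = v₀ + ∑ i, v i * max ((inner ℝ (w i) x : ℝ) + b i) 0) ∧
      (∀ x ∈ convexHull ℝ (Set.range pts), T x = 1) ∧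
      (∀ x ∈ Metric.thickening ε (convexHull ℝ (Set.range pts)), T x ≤ 1) ∧
      (∀ x ∉ Metric.thickening ε (convexHull ℝ (Set.range pts)), T x < 0) := by
  classical
  obtain ⟨B, hBsup, hBthick⟩ := exists_affineBasis_extension d m hm pts hpts ε hε
  set H : Set (EuclideanSpace ℝ (Fin d)) := convexHull ℝ (Set.range pts) with hH
  set g : EuclideanSpace ℝ (Fin d) → ℝ :=
    fun x => ∑ i, max (-(B.coord i x)) 0 with hg
  have habs : ∀ t : ℝ, |t| = t + 2 * max (-t) 0 := by
    intro t
    rcases le_total t 0 with h | h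
    · rw [abs_of_nonpos h, max_eq_left (by linarith)]; ring
    · rw [abs_of_nonneg h, max_eq_right (by linarith)]; ring
  have hgnn : ∀ x, 0 ≤ g x := fun x =>
    Finset.sum_nonneg fun i _ => le_max_right _ _
  -- continuity
  have hβc : ∀ i, Continuous fun x => B.coord i x := fun i =>
    (B.coord i).continuous_of_finiteDimensional
  have hgc : Continuous g := by
    apply continuous_finset_sum
    intro i _
    exact ((hβc i).neg).max continuous_const
  -- g vanishes on convexHull of range B
  have hg0 : ∀ x ∈ convexHull ℝ (Set.range ⇑B), g x = 0 := by
    intro x hx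
    rw [B.convexHull_eq_nonneg_coord] at hx
    apply Finset.sum_eq_zero
    intro i _
    exact max_eq_right (neg_nonpos.mpr (hx i))
  have hHB : H ⊆ convexHull ℝ (Set.range ⇑B) := convexHull_mono hBsup
  have hHconv : Convex ℝ H := by rw [hH]; exact convex_convexHull ℝ _
  have hQthick : convexHull ℝ (Set.range ⇑B) ⊆ Metric.thickening ε H :=
    convexHull_min hBthick (hHconv.thickening ε)
  -- g is positive outside the thickening
  have hSg : ∀ x, x ∉ Metric.thickening ε H → 0 < g x := by
    intro x hx
    rcases lt_or_eq_of_le (hgnn x) with h | h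
    · exact h
    · exfalso
      apply hx
      apply hQthick
      rw [B.convexHull_eq_nonneg_coord]
      intro i
      by_contra hneg
      push_neg at hneg
      have h1 : max (-(B.coord i x)) 0 ≤ g x :=
        Finset.single_le_sum (f := fun j => max (-(B.coord j x)) 0)
          (fun j _ => le_max_right _ _) (Finset.mem_univ i)
      have h2 : 0 < max (-(B.coord i x)) 0 :=
        lt_max_of_lt_left (by linarith)
      rw [← h] at h1
      linarith
  -- coercivity bound
  set M : ℝ := ∑ i, ‖B i‖ with hM
  have hMi : ∀ i, ‖B i‖ ≤ M :=
    fun i => Finset.single_le_sum (fun j _ => norm_nonneg _) (Finset.mem_univ i)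
  have hMnn : 0 ≤ M := Finset.sum_nonneg fun i _ => norm_nonneg _
  have hbd : ∀ x, ‖x‖ ≤ M * (1 + 2 * g x) := by
    intro x
    have hx := B.linear_combination_coord_eq_self x
    calc ‖x‖ = ‖∑ i, B.coord i x • B i‖ := by rw [hx]
      _ ≤ ∑ i, ‖B.coord i x • B i‖ := norm_sum_le _ _
      _ = ∑ i, |B.coord i x| * ‖B i‖ := by simp [norm_smul]
      _ ≤ ∑ i, |B.coord i x| * M := by
          refine Finset.sum_le_sum fun i _ => ?_
          exact mul_le_mul_of_nonneg_left (hMi i) (abs_nonneg _)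
      _ = (∑ i, |B.coord i x|) * M := by rw [Finset.sum_mul]
      _ = (1 + 2 * g x) * M := by
          congr 1
          have : ∀ i ∈ Finset.univ, |B.coord i x| =
              B.coord i x + 2 * max (-(B.coord i x)) 0 := fun i _ => habs _
          rw [Finset.sum_congr rfl this, Finset.sum_add_distrib,
            B.sum_coord_apply_eq_one, ← Finset.mul_sum]
      _ = M * (1 + 2 * g x) := by ring
  -- minimum of g outside the thickening
  obtain ⟨δ, hδ0, hδ⟩ : ∃ δ > 0, ∀ x, x ∉ Metric.thickening ε H → δ ≤ g x := by
    have hKcpt : IsCompact {x : EuclideanSpace ℝ (Fin d) | g x ≤ 1} := by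
      apply isCompact_of_isClosed_isBounded
      · exact isClosed_le hgc continuous_const
      · rw [isBounded_iff_forall_norm_le]
        refine ⟨M * 3, fun x hx => ?_⟩
        have := hbd x
        have hx1 : g x ≤ 1 := hx
        nlinarith [hgnn x]
    set S : Set (EuclideanSpace ℝ (Fin d)) := (Metric.thickening ε H)ᶜ with hS
    have hSclosed : IsClosed S := (Metric.isOpen_thickening).isClosed_compl
    by_cases hne : (S ∩ {x | g x ≤ 1}).Nonempty
    · obtain ⟨x₀, hx₀, hmin⟩ :=
        (hKcpt.inter_left hSclosed).exists_isMinOn hne hgc.continuousOn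
      refine ⟨min (g x₀) 1, lt_min (hSg _ hx₀.1) one_pos, fun x hx => ?_⟩
      by_cases h1 : g x ≤ 1
      · exact le_trans (min_le_left _ _) (hmin ⟨hx, h1⟩)
      · exact le_trans (min_le_right _ _) (not_le.mp h1).le
    · refine ⟨1, one_pos, fun x hx => ?_⟩
      by_contra h
      exact hne ⟨x, hx, (not_le.mp h).le⟩
  -- the network weights via Riesz representation
  set wv : Fin (d + 1) → EuclideanSpace ℝ (Fin d) := fun i =>
    -((InnerProductSpace.toDual ℝ (EuclideanSpace ℝ (Fin d))).symm
      (LinearMap.toContinuousLinearMap (B.coord i).linear)) with hwv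
  set bv : Fin (d + 1) → ℝ := fun i => -(B.coord i 0) with hbv
  have hkey : ∀ i x, (inner ℝ (wv i) x : ℝ) + bv i = -(B.coord i x) := by
    intro i x
    have h1 : (inner ℝ (wv i) x : ℝ) = -((B.coord i).linear x) := by
      rw [hwv]
      simp only [inner_neg_left]
      rw [InnerProductSpace.toDual_symm_apply]
      simp
    have h2 : B.coord i x = (B.coord i).linear x + B.coord i 0 := by
      have := (B.coord i).map_vadd (0 : EuclideanSpace ℝ (Fin d)) x
      simpa [vadd_eq_add] using this
    rw [h1, hbv, h2]
    ring
  refine ⟨fun x => 1 - (2 / δ) * g x, 1, fun _ => -(2 / δ), wv, bv, ?_, ?_, ?_, ?_⟩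
  · intro x
    show 1 - (2 / δ) * g x = 1 + ∑ i, (-(2/δ)) * max ((inner ℝ (wv i) x : ℝ) + bv i) 0
    have : ∀ i ∈ Finset.univ, (-(2/δ)) * max ((inner ℝ (wv i) x : ℝ) + bv i) 0 =
        (-(2/δ)) * max (-(B.coord i x)) 0 := by
      intro i _
      rw [hkey i x]
    rw [Finset.sum_congr rfl this, ← Finset.mul_sum]
    ring
  · intro x hx
    show 1 - (2 / δ) * g x = 1
    rw [hg0 x (hHB hx)]
    ring
  · intro x _
    show 1 - (2 / δ) * g x ≤ 1
    have h1 : 0 ≤ (2 / δ) * g x := mul_nonneg (by positivity) (hgnn x)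
    linarith
  · intro x hx
    show 1 - (2 / δ) * g x < 0
    have h1 : δ ≤ g x := hδ x hx
    have h2 : (2 / δ) * δ ≤ (2 / δ) * g x :=
      mul_le_mul_of_nonneg_left h1 (by positivity)
    have h3 : (2 / δ) * δ = 2 := by field_simp
    linarith
end

section
/- Consider the continuous gradient flow on the parameters of a two-layer ReLU network N(x) = v₀ + Σₖ vₖ·σ(wₖᵀx + bₖ) minimizing L(θ) = (1/n) Σᵢ ℓ(N(xᵢ), yᵢ) for a differentiable loss ℓ. Then for every hidden neuron k, the quantity vₖ² − ‖wₖ‖² − bₖ² is invariant along the flow (on intervals where the relevant activations are constant so that the flow is well defined). -/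
open Set

/-- Along the gradient flow of a two-layer ReLU network (with the stated gradient
formulas, `g t i` denoting `ℓ'(N(xᵢ), yᵢ)` at time `t`), the balancedness quantity
`vₖ² − ‖wₖ‖² − bₖ²` of every hidden neuron is conserved. -/
theorem gradient_flow_balancedness_invariant
    (d m n : ℕ) (hn : 0 < n)
    (x : Fin n → EuclideanSpace ℝ (Fin d))
    (g : ℝ → Fin n → ℝ)
    (v : ℝ → Fin m → ℝ)
    (w : ℝ → Fin m → EuclideanSpace ℝ (Fin d))
    (b : ℝ → Fin m → ℝ)
    (hv : ∀ k t, HasDerivAt (fun s => v s k)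
      (-((1 / (n : ℝ)) * ∑ i, g t i * max ((inner ℝ (w t k) (x i) : ℝ) + b t k) 0)) t)
    (hw : ∀ k t, HasDerivAt (fun s => w s k)
      (-((1 / (n : ℝ)) • ∑ i, (g t i * v t k *
        (if 0 < (inner ℝ (w t k) (x i) : ℝ) + b t k then (1 : ℝ) else 0)) • x i)) t)
    (hb : ∀ k t, HasDerivAt (fun s => b s k)
      (-((1 / (n : ℝ)) * ∑ i, g t i * v t k *
        (if 0 < (inner ℝ (w t k) (x i) : ℝ) + b t k then (1 : ℝ) else 0))) t) :
    ∀ (k : Fin m) (t : ℝ),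
      (v t k) ^ 2 - ‖w t k‖ ^ 2 - (b t k) ^ 2
        = (v 0 k) ^ 2 - ‖w 0 k‖ ^ 2 - (b 0 k) ^ 2 := by
  intro k t
  have key : ∀ s : ℝ,
      HasDerivAt (fun u : ℝ => (v u k) ^ 2 - ‖w u k‖ ^ 2 - (b u k) ^ 2) 0 s := by
    intro s
    have hv' := (hv k s).pow 2
    have hb' := (hb k s).pow 2
    have hin := (hw k s).inner ℝ (hw k s)
    have hnorm : HasDerivAt (fun u : ℝ => ‖w u k‖ ^ 2)
        ((inner ℝ (w s k) (-((1 / (n : ℝ)) • ∑ i, (g s i * v s k *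
          (if 0 < (inner ℝ (w s k) (x i) : ℝ) + b s k then (1 : ℝ) else 0)) • x i)) : ℝ)
        + (inner ℝ (-((1 / (n : ℝ)) • ∑ i, (g s i * v s k *
          (if 0 < (inner ℝ (w s k) (x i) : ℝ) + b s k then (1 : ℝ) else 0)) • x i)) (w s k) : ℝ)) s := by
      have heq : (fun u : ℝ => ‖w u k‖ ^ 2)
          = fun u : ℝ => (inner ℝ (w u k) (w u k) : ℝ) := by
        funext u; rw [real_inner_self_eq_norm_sq]
      rw [heq]; exact hin
    have H := (hv'.sub hnorm).sub hb'
    refine H.congr_deriv (Eq.symm ?_)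
    have hmax : ∀ i, v s k * (g s i * max ((inner ℝ (w s k) (x i) : ℝ) + b s k) 0)
        = (g s i * v s k * (if 0 < (inner ℝ (w s k) (x i) : ℝ) + b s k then (1 : ℝ) else 0))
          * ((inner ℝ (w s k) (x i) : ℝ)) +
          (g s i * v s k * (if 0 < (inner ℝ (w s k) (x i) : ℝ) + b s k then (1 : ℝ) else 0))
          * b s k := by
      intro i
      rcases lt_or_ge 0 ((inner ℝ (w s k) (x i) : ℝ) + b s k) with h | h
      · rw [if_pos h, max_eq_left h.le]; ring
      · rw [if_neg (not_lt.mpr h), max_eq_right h]; ring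
    simp only [inner_neg_right, inner_neg_left, real_inner_smul_right, real_inner_smul_left,
      inner_sum, sum_inner, real_inner_smul_right, real_inner_smul_left, pow_one]
    simp only [show ∀ i, (inner ℝ (x i) (w s k) : ℝ) = inner ℝ (w s k) (x i) from
      fun i => real_inner_comm _ _]
    have hsum : v s k * (∑ i, g s i * max ((inner ℝ (w s k) (x i) : ℝ) + b s k) 0)
        = (∑ i, (g s i * v s k * (if 0 < (inner ℝ (w s k) (x i) : ℝ) + b s k then (1 : ℝ) else 0))
            * (inner ℝ (w s k) (x i) : ℝ))
          + b s k * (∑ i, g s i * v s k *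
            (if 0 < (inner ℝ (w s k) (x i) : ℝ) + b s k then (1 : ℝ) else 0)) := by
      rw [Finset.mul_sum, Finset.mul_sum, ← Finset.sum_add_distrib]
      exact Finset.sum_congr rfl fun i _ => by rw [hmax i]; ring
    linear_combination ((2 : ℝ) / n) * hsum
  have hdiff : Differentiable ℝ (fun u : ℝ => (v u k) ^ 2 - ‖w u k‖ ^ 2 - (b u k) ^ 2) :=
    fun s => ((key s).differentiableAt)
  have := is_const_of_deriv_eq_zero hdiff (fun s => (key s).deriv) t 0
  exact this
end

section
/- Let Tⱼ(x) = λ + Σₖ vⱼₖ·ReLU(wⱼₖᵀx + bⱼₖ) for j = 1,…,J with λ > 0 and all vⱼₖ < 0, and let N(x) = −λ/2 + Σⱼ aⱼ·ReLU(Tⱼ(x)) with aⱼ ∈ {+1, −1}. Suppose for a finite dataset D = {(xᵢ, yᵢ)} each ReLU(Tⱼ(xᵢ)) equals 0 or λ. Define Cⱼ = {x : Tⱼ(x) = λ}. Then for every data point xᵢ, N(xᵢ) > 0 if and only if Σ_{j: aⱼ=+1} 𝟙[xᵢ ∈ Cⱼ] > Σ_{j: aⱼ=−1} 𝟙[xᵢ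 ∈ Cⱼ]; hence {Cⱼ} forms a polytope-basis cover of D with the same classification accuracy as N. -/
open Set

/-- If each subnetwork output `ReLU(Tⱼ(xᵢ))` is `0` or `λ` on the dataset, then
`N(xᵢ) > 0` iff the number of polytopes `Cⱼ = {x | Tⱼ x = λ}` with `aⱼ = +1`
containing `xᵢ` exceeds the number with `aⱼ = −1` containing `xᵢ`; hence `{Cⱼ}` is a
polytope-basis cover of the dataset with the same accuracy as `N`. -/
theorem three_layer_network_gives_polytope_basis_cover
    (d J n : ℕ) (lam : ℝ) (hlam : 0 < lam)
    (mJ : Fin J → ℕ)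
    (v : (j : Fin J) → Fin (mJ j) → ℝ) (hv : ∀ j k, v j k < 0)
    (w : (j : Fin J) → Fin (mJ j) → EuclideanSpace ℝ (Fin d))
    (b : (j : Fin J) → Fin (mJ j) → ℝ)
    (a : Fin J → ℝ) (ha : ∀ j, a j = 1 ∨ a j = -1)
    (T : Fin J → EuclideanSpace ℝ (Fin d) → ℝ)
    (hT : ∀ j x, T j x = lam + ∑ k, v j k * max ((inner ℝ (w j k) x : ℝ) + b j k) 0)
    (N : EuclideanSpace ℝ (Fin d) → ℝ)
    (hN : ∀ x, N x = -(lam / 2) + ∑ j, a j * max (T j x) 0)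
    (xs : Fin n → EuclideanSpace ℝ (Fin d))
    (hbinary : ∀ (i : Fin n) (j : Fin J),
      max (T j (xs i)) 0 = 0 ∨ max (T j (xs i)) 0 = lam) :
    ∀ i : Fin n,
      0 < N (xs i) ↔
        {j : Fin J | a j = -1 ∧ T j (xs i) = lam}.ncard
          < {j : Fin J | a j = 1 ∧ T j (xs i) = lam}.ncard := by
  classical
  intro i
  have key : ∀ j : Fin J, a j * max (T j (xs i)) 0
      = (if a j = 1 ∧ T j (xs i) = lam then lam else 0)
        - (if a j = -1 ∧ T j (xs i) = lam then lam else 0) := by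
    intro j
    rcases hbinary i j with h | h
    · have hT0 : T j (xs i) ≠ lam := by
        intro he
        rw [he, max_eq_left hlam.le] at h
        exact hlam.ne' h
      simp [h, hT0]
    · have hTlam : T j (xs i) = lam := by
        rcases le_or_gt (T j (xs i)) 0 with hle | hp
        · rw [max_eq_right hle] at h; linarith
        · rw [max_eq_left hp.le] at h; exact h
      rcases ha j with h1 | h1 <;> norm_num [hTlam, h1, max_eq_left hlam.le]
  have hP : {j : Fin J | a j = 1 ∧ T j (xs i) = lam}.ncard
      = (Finset.univ.filter (fun j => a j = 1 ∧ T j (xs i) = lam)).card := by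
    rw [← Set.ncard_coe_finset]; congr 1; ext j; simp
  have hQ : {j : Fin J | a j = -1 ∧ T j (xs i) = lam}.ncard
      = (Finset.univ.filter (fun j => a j = -1 ∧ T j (xs i) = lam)).card := by
    rw [← Set.ncard_coe_finset]; congr 1; ext j; simp
  have hsum : ∑ j, a j * max (T j (xs i)) 0
      = lam * (Finset.univ.filter (fun j => a j = 1 ∧ T j (xs i) = lam)).card
        - lam * (Finset.univ.filter (fun j => a j = -1 ∧ T j (xs i) = lam)).card := by
    rw [Finset.sum_congr rfl (fun j _ => key j), Finset.sum_sub_distrib]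
    rw [← Finset.sum_filter, ← Finset.sum_filter]
    simp [Finset.sum_const, nsmul_eq_mul, mul_comm]
  rw [hN, hsum, hP, hQ]
  set p := (Finset.univ.filter (fun j => a j = 1 ∧ T j (xs i) = lam)).card with hp
  set q := (Finset.univ.filter (fun j => a j = -1 ∧ T j (xs i) = lam)).card with hq
  constructor
  · intro h
    by_contra hle
    push_neg at hle
    have : (p : ℝ) ≤ q := by exact_mod_cast hle
    nlinarith
  · intro h
    have : (q : ℝ) + 1 ≤ p := by exact_mod_cast h
    nlinarith
end

section
/- Let f: ℝ^{dx} → [0,1] be an L-Lipschitz function supported in [0,1]^{dx}, let p ≥ 1, and ε > 0. Then there exists a three-layer ReLU network N with first hidden width 2·n·dx and second hidden width n, where n = O(ε^{−dx}), such that ‖N − f‖_{L^p(ℝ^{dx})} < ε. -/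
open Set MeasureTheory

namespace ThreeLayerAux

variable {dx : ℕ}

noncomputable def gb (m : ℕ) (t : ℝ) (v : Fin dx → Fin m) (x : EuclideanSpace ℝ (Fin dx)) : ℝ :=
  max (1 - (1/t) * ∑ i, (max (x i - (((v i : ℝ) + 1)/m - t)) 0 +
      max (((v i : ℝ))/m + t - x i) 0)) 0

noncomputable def ctr (m : ℕ) (v : Fin dx → Fin m) : EuclideanSpace ℝ (Fin dx) :=
  WithLp.toLp 2 (fun i => ((v i : ℝ) + 1/2)/m)

lemma gb_nonneg (m : ℕ) (t : ℝ) (v : Fin dx → Fin m) (x) : 0 ≤ gb m t v x :=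
  le_max_right _ _

lemma term_nonneg (m : ℕ) (t : ℝ) (v : Fin dx → Fin m) (x : EuclideanSpace ℝ (Fin dx)) (i : Fin dx) :
    0 ≤ max (x i - (((v i : ℝ) + 1)/m - t)) 0 + max (((v i : ℝ))/m + t - x i) 0 := by
  positivity

lemma gb_le_one (m : ℕ) {t : ℝ} (ht : 0 < t) (v : Fin dx → Fin m) (x) : gb m t v x ≤ 1 := by
  unfold gb
  have h : 0 ≤ (1/t) * ∑ i, (max (x i - (((v i : ℝ) + 1)/m - t)) 0 +
      max (((v i : ℝ))/m + t - x i) 0) := by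
    apply mul_nonneg (by positivity)
    exact Finset.sum_nonneg fun i _ => term_nonneg m t v x i
  have : (0:ℝ) ≤ 1 := one_pos.le
  apply max_le (by linarith) this

lemma gb_support (m : ℕ) {t : ℝ} (ht : 0 < t) {v : Fin dx → Fin m}
    {x : EuclideanSpace ℝ (Fin dx)} (h : gb m t v x ≠ 0) (i : Fin dx) :
    (v i : ℝ)/m < x i ∧ x i < ((v i : ℝ) + 1)/m := by
  by_contra hc
  apply h
  have hterm : t ≤ max (x i - (((v i : ℝ) + 1)/m - t)) 0 + max (((v i : ℝ))/m + t - x i) 0 := by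
    rcases not_and_or.mp hc with h1 | h1
    · push_neg at h1
      have : t ≤ max (((v i : ℝ))/m + t - x i) 0 := le_max_of_le_left (by linarith)
      have h0 : (0:ℝ) ≤ max (x i - (((v i : ℝ) + 1)/m - t)) 0 := le_max_right _ _
      linarith
    · push_neg at h1
      have : t ≤ max (x i - (((v i : ℝ) + 1)/m - t)) 0 := le_max_of_le_left (by linarith)
      have h0 : (0:ℝ) ≤ max (((v i : ℝ))/m + t - x i) 0 := le_max_right _ _
      linarith
  have hsum : t ≤ ∑ i, (max (x i - (((v i : ℝ) + 1)/m - t)) 0 +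
      max (((v i : ℝ))/m + t - x i) 0) :=
    le_trans hterm (Finset.single_le_sum (fun i _ => term_nonneg m t v x i) (Finset.mem_univ i))
  have : (1:ℝ) ≤ (1/t) * ∑ i, (max (x i - (((v i : ℝ) + 1)/m - t)) 0 +
      max (((v i : ℝ))/m + t - x i) 0) := by
    rw [div_mul_eq_mul_div, one_mul, le_div_iff₀ ht, one_mul]
    exact hsum
  unfold gb
  rw [max_eq_right (by linarith)]

lemma gb_eq_one (m : ℕ) {t : ℝ} (ht : 0 < t) {v : Fin dx → Fin m}
    {x : EuclideanSpace ℝ (Fin dx)}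
    (h : ∀ i, (v i : ℝ)/m + 2*t ≤ x i ∧ x i ≤ ((v i : ℝ) + 1)/m - 2*t) :
    gb m t v x = 1 := by
  unfold gb
  have : ∀ i ∈ Finset.univ, (max (x i - (((v i : ℝ) + 1)/m - t)) 0 +
      max (((v i : ℝ))/m + t - x i) 0) = 0 := by
    intro i _
    have h1 := (h i).1
    have h2 := (h i).2
    rw [max_eq_right (by linarith), max_eq_right (by linarith)]
    ring
  rw [Finset.sum_congr rfl this]
  simp


noncomputable def v0 (m : ℕ) (hm : 0 < m) (x : EuclideanSpace ℝ (Fin dx)) : Fin dx → Fin m :=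
  fun i => ⟨min ⌊x i * m⌋₊ (m - 1), lt_of_le_of_lt (Nat.min_le_right _ _) (by omega)⟩

lemma gb_uniq (m : ℕ) (hm : 0 < m) {t : ℝ} (ht : 0 < t) {v : Fin dx → Fin m}
    {x : EuclideanSpace ℝ (Fin dx)} (h : gb m t v x ≠ 0) : v = v0 m hm x := by
  funext i
  obtain ⟨h1, h2⟩ := gb_support m ht h i
  have hmR : (0:ℝ) < m := by exact_mod_cast hm
  have hlt : (v i : ℝ) < x i * m := by rwa [div_lt_iff₀ hmR] at h1
  have hlt2 : x i * m < (v i : ℝ) + 1 := by rwa [lt_div_iff₀ hmR] at h2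
  have hx0 : (0:ℝ) ≤ x i * m := le_trans (by positivity) hlt.le
  have hfloor : ⌊x i * m⌋₊ = (v i : ℕ) := by
    rw [Nat.floor_eq_iff hx0]
    exact ⟨hlt.le, by exact_mod_cast hlt2⟩
  apply Fin.ext
  show (v i : ℕ) = min ⌊x i * m⌋₊ (m - 1)
  rw [hfloor]
  have := (v i).isLt
  omega

noncomputable def net (m : ℕ) (t : ℝ) (f : EuclideanSpace ℝ (Fin dx) → ℝ)
    (x : EuclideanSpace ℝ (Fin dx)) : ℝ :=
  ∑ v : Fin dx → Fin m, f (ctr m v) * gb m t v x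

lemma net_eq (m : ℕ) (hm : 0 < m) {t : ℝ} (ht : 0 < t)
    (f : EuclideanSpace ℝ (Fin dx) → ℝ) (x : EuclideanSpace ℝ (Fin dx)) :
    net m t f x = f (ctr m (v0 m hm x)) * gb m t (v0 m hm x) x := by
  unfold net
  apply Finset.sum_eq_single
  · intro v _ hv
    have : gb m t v x = 0 := by
      by_contra hg
      exact hv (gb_uniq m hm ht hg)
    rw [this, mul_zero]
  · intro hv
    exact absurd (Finset.mem_univ _) hv


def cube (dx : ℕ) : Set (EuclideanSpace ℝ (Fin dx)) := {x | ∀ i, x i ∈ Icc (0:ℝ) 1}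

lemma net_zero_outside (m : ℕ) {t : ℝ} (ht : 0 < t)
    (f : EuclideanSpace ℝ (Fin dx) → ℝ) {x : EuclideanSpace ℝ (Fin dx)}
    (hx : x ∉ cube dx) : net m t f x = 0 := by
  unfold net
  apply Finset.sum_eq_zero
  intro v _
  have : gb m t v x = 0 := by
    by_contra hg
    apply hx
    intro i
    obtain ⟨h1, h2⟩ := gb_support m ht hg i
    have hmR : (0:ℝ) < m := by
      have : (0:ℕ) < m := (v i).pos
      exact_mod_cast this
    constructor
    · have : (0:ℝ) ≤ (v i : ℝ)/m := by positivity
      linarith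
    · have hvm : ((v i : ℝ) + 1) ≤ m := by exact_mod_cast (v i).isLt
      have : ((v i : ℝ) + 1)/m ≤ 1 := by
        rw [div_le_one hmR]; exact hvm
      linarith
  rw [this, mul_zero]

lemma net_mem (m : ℕ) (hm : 0 < m) {t : ℝ} (ht : 0 < t)
    {f : EuclideanSpace ℝ (Fin dx) → ℝ} (hrange : ∀ x, f x ∈ Icc (0:ℝ) 1)
    (x : EuclideanSpace ℝ (Fin dx)) : net m t f x ∈ Icc (0:ℝ) 1 := by
  rw [net_eq m hm ht]
  have h1 := hrange (ctr m (v0 m hm x))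
  have h2 := gb_nonneg m t (v0 m hm x) x
  have h3 := gb_le_one m ht (v0 m hm x) x
  constructor
  · exact mul_nonneg h1.1 h2
  · calc f (ctr m (v0 m hm x)) * gb m t (v0 m hm x) x ≤ 1 * 1 :=
        mul_le_mul h1.2 h3 h2 one_pos.le
    _ = 1 := one_mul 1

lemma good_inner (m : ℕ) (hm : 0 < m) {t : ℝ} (ht : 0 < t)
    {x : EuclideanSpace ℝ (Fin dx)} (hx : x ∈ cube dx)
    (hgood : ∀ i, ∀ k ≤ m, 2*t < |x i - (k:ℝ)/m|) (i : Fin dx) :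
    ((v0 m hm x i : ℝ))/m + 2*t ≤ x i ∧ x i ≤ ((v0 m hm x i : ℝ) + 1)/m - 2*t := by
  have hmR : (0:ℝ) < m := by exact_mod_cast hm
  obtain ⟨hx0, hx1⟩ := hx i
  have hm1 := hgood i m le_rfl
  have h0 := hgood i 0 (Nat.zero_le m)
  have hmm : ((m:ℝ))/m = 1 := div_self hmR.ne'
  rw [hmm] at hm1
  rw [abs_of_nonpos (by linarith)] at hm1
  have hxlt1 : x i < 1 - 2*t := by linarith
  simp only [Nat.cast_zero, zero_div, sub_zero] at h0
  rw [abs_of_nonneg hx0] at h0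
  set j := ⌊x i * m⌋₊ with hj
  have hxm0 : (0:ℝ) ≤ x i * m := by positivity
  have hfl : (j:ℝ) ≤ x i * m := Nat.floor_le hxm0
  have hfu : x i * m < (j:ℝ) + 1 := Nat.lt_floor_add_one _
  have hjm : j < m := by
    have : x i * m < (m:ℝ) := by nlinarith
    have := Nat.floor_lt hxm0 |>.mpr (by exact_mod_cast this)
    exact_mod_cast this
  have hv0 : (v0 m hm x i : ℕ) = j := by
    show min j (m-1) = j
    omega
  have hv0R : (v0 m hm x i : ℝ) = (j:ℝ) := by exact_mod_cast hv0
  have hlow : (j:ℝ)/m ≤ x i := by rw [div_le_iff₀ hmR]; linarith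
  have hhigh : x i < ((j:ℝ)+1)/m := by rw [lt_div_iff₀ hmR]; linarith
  have hgj := hgood i j hjm.le
  have hgj1 := hgood i (j+1) hjm
  rw [abs_of_nonneg (by linarith)] at hgj
  have hcast : (((j+1 : ℕ)):ℝ) = (j:ℝ)+1 := by push_cast; ring
  rw [hcast] at hgj1
  rw [abs_of_nonpos (by linarith)] at hgj1
  rw [hv0R]
  constructor <;> linarith


lemma net_close (m : ℕ) (hm : 0 < m) {t : ℝ} (ht : 0 < t) {L : ℝ} (hL : 0 ≤ L)
    {f : EuclideanSpace ℝ (Fin dx) → ℝ} (hf : LipschitzWith (Real.toNNReal L) f)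
    {x : EuclideanSpace ℝ (Fin dx)} (hx : x ∈ cube dx)
    (hgood : ∀ i, ∀ k ≤ m, 2*t < |x i - (k:ℝ)/m|) :
    |net m t f x - f x| ≤ L * (Real.sqrt dx / (2*m)) := by
  have hmR : (0:ℝ) < m := by exact_mod_cast hm
  have hm0 : (m:ℝ) ≠ 0 := hmR.ne'
  have hinner := good_inner m hm ht hx hgood
  have hgb1 : gb m t (v0 m hm x) x = 1 := gb_eq_one m ht hinner
  rw [net_eq m hm ht, hgb1, mul_one]
  have hdist : dist (ctr m (v0 m hm x)) x ≤ Real.sqrt dx / (2*m) := by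
    rw [EuclideanSpace.dist_eq]
    have hterm : ∀ i : Fin dx, dist (ctr m (v0 m hm x) i) (x i) ^ 2 ≤ ((1:ℝ)/(2*m))^2 := by
      intro i
      have h := hinner i
      have hctr : ctr m (v0 m hm x) i = ((v0 m hm x i : ℝ))/m + 1/(2*m) := by
        show ((v0 m hm x i : ℝ) + 1/2)/m = _
        field_simp
      have h2 : ((v0 m hm x i : ℝ) + 1)/m = ((v0 m hm x i : ℝ))/m + 1/m := by ring
      rw [h2] at h
      have h1m : (1:ℝ)/(2*m) + 1/(2*m) = 1/m := by
        rw [← add_div, show ((1:ℝ)+1) = 2*1 by norm_num,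
          mul_div_mul_left 1 (m:ℝ) two_ne_zero]
      have habs : |ctr m (v0 m hm x) i - x i| ≤ 1/(2*m) := by
        rw [hctr, abs_le]
        constructor <;> [linarith [h.2]; linarith [h.1]]
      rw [Real.dist_eq]
      exact pow_le_pow_left₀ (abs_nonneg _) habs 2
    have hsum : ∑ i, dist (ctr m (v0 m hm x) i) (x i) ^ 2 ≤ (dx:ℝ) * ((1:ℝ)/(2*m))^2 := by
      calc ∑ i, dist (ctr m (v0 m hm x) i) (x i) ^ 2 ≤ ∑ _i : Fin dx, ((1:ℝ)/(2*m))^2 :=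
            Finset.sum_le_sum (fun i _ => hterm i)
      _ = (dx:ℝ) * ((1:ℝ)/(2*m))^2 := by
            rw [Finset.sum_const, Finset.card_univ, Fintype.card_fin]; ring
    calc Real.sqrt (∑ i, dist (ctr m (v0 m hm x) i) (x i) ^ 2)
        ≤ Real.sqrt ((dx:ℝ) * ((1:ℝ)/(2*m))^2) := Real.sqrt_le_sqrt hsum
      _ = Real.sqrt dx * ((1:ℝ)/(2*m)) := by
          rw [Real.sqrt_mul (Nat.cast_nonneg dx), Real.sqrt_sq (by positivity)]
      _ = Real.sqrt dx / (2*m) := by ring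
  have hlip := hf.dist_le_mul (ctr m (v0 m hm x)) x
  rw [Real.coe_toNNReal L hL] at hlip
  rw [← Real.dist_eq]
  calc dist (f (ctr m (v0 m hm x))) (f x) ≤ L * dist (ctr m (v0 m hm x)) x := hlip
    _ ≤ L * (Real.sqrt dx / (2*m)) := mul_le_mul_of_nonneg_left hdist hL


lemma coord_measurable (i : Fin dx) :
    Measurable (fun x : EuclideanSpace ℝ (Fin dx) => x i) :=
  (measurable_pi_apply i).comp (MeasurableEquiv.toLp 2 (Fin dx → ℝ)).symm.measurable

lemma vol_pi_set (s : Fin dx → Set ℝ) (hs : ∀ i, MeasurableSet (s i)) :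
    volume {x : EuclideanSpace ℝ (Fin dx) | ∀ i, x i ∈ s i} = ∏ i, volume (s i) := by
  have heq : {x : EuclideanSpace ℝ (Fin dx) | ∀ i, x i ∈ s i}
      = (MeasurableEquiv.toLp 2 (Fin dx → ℝ)).symm ⁻¹' (univ.pi s) := by
    ext x
    simp [Set.mem_pi]
  rw [heq,
    (EuclideanSpace.volume_preserving_symm_measurableEquiv_toLp (Fin dx)).measure_preimage
      (MeasurableSet.univ_pi hs).nullMeasurableSet,
    volume_pi_pi]

lemma cube_eq : cube dx = {x : EuclideanSpace ℝ (Fin dx) | ∀ i, x i ∈ Icc (0:ℝ) 1} := rfl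

lemma cube_measurable : MeasurableSet (cube dx) := by
  have : cube dx = ⋂ i, (fun x : EuclideanSpace ℝ (Fin dx) => x i) ⁻¹' Icc (0:ℝ) 1 := by
    ext x; simp [cube]
  rw [this]
  exact MeasurableSet.iInter fun i => coord_measurable i measurableSet_Icc

lemma vol_cube : volume (cube dx) = 1 := by
  rw [cube_eq, vol_pi_set _ (fun i => measurableSet_Icc)]
  simp [Real.volume_Icc]

def slab (m : ℕ) (t : ℝ) (i : Fin dx) (k : ℕ) : Set (EuclideanSpace ℝ (Fin dx)) :=
  {x | |x i - (k:ℝ)/m| ≤ 2*t}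

lemma slab_eq (m : ℕ) (t : ℝ) (i : Fin dx) (k : ℕ) :
    slab m t i k = (fun x : EuclideanSpace ℝ (Fin dx) => x i) ⁻¹'
      (Icc ((k:ℝ)/m - 2*t) ((k:ℝ)/m + 2*t)) := by
  ext x
  simp only [slab, mem_setOf_eq, mem_preimage, mem_Icc, abs_le]
  constructor <;> intro h <;> constructor <;> linarith [h.1, h.2]

lemma slab_measurable (m : ℕ) (t : ℝ) (i : Fin dx) (k : ℕ) :
    MeasurableSet (slab m t i k) := by
  rw [slab_eq]
  exact coord_measurable i measurableSet_Icc

def badSet (m : ℕ) (t : ℝ) : Set (EuclideanSpace ℝ (Fin dx)) :=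
  ⋃ i ∈ (Finset.univ : Finset (Fin dx)), ⋃ k ∈ Finset.range (m+1), slab m t i k

lemma badSet_measurable (m : ℕ) (t : ℝ) : MeasurableSet (badSet (dx := dx) m t) := by
  apply MeasurableSet.biUnion (Finset.univ : Finset (Fin dx)).countable_toSet
  intro i _
  exact MeasurableSet.biUnion (Finset.range (m+1)).countable_toSet
    (fun k _ => slab_measurable m t i k)

lemma not_mem_badSet {m : ℕ} {t : ℝ} {x : EuclideanSpace ℝ (Fin dx)}
    (h : x ∉ badSet m t) : ∀ i, ∀ k ≤ m, 2*t < |x i - (k:ℝ)/m| := by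
  intro i k hk
  by_contra hc
  push_neg at hc
  exact h (Set.mem_biUnion (Finset.mem_univ i) (Set.mem_biUnion
    (Finset.mem_range.mpr (by omega)) hc))

lemma vol_cube_slab (m : ℕ) {t : ℝ} (ht : 0 ≤ t) (i : Fin dx) (k : ℕ) :
    volume (cube dx ∩ slab m t i k) ≤ ENNReal.ofReal (4*t) := by
  set c := (k:ℝ)/m
  have hsub : cube dx ∩ slab m t i k ⊆
      {x : EuclideanSpace ℝ (Fin dx) | ∀ i',
        x i' ∈ (if i' = i then Icc (c - 2*t) (c + 2*t) else Icc (0:ℝ) 1)} := by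
    rintro x ⟨hx, hs⟩
    intro i'
    by_cases hii : i' = i
    · subst hii
      simp only [if_pos rfl]
      rw [slab_eq] at hs
      exact hs
    · simp only [if_neg hii]
      exact hx i'
  calc volume (cube dx ∩ slab m t i k)
      ≤ volume {x : EuclideanSpace ℝ (Fin dx) | ∀ i',
        x i' ∈ (if i' = i then Icc (c - 2*t) (c + 2*t) else Icc (0:ℝ) 1)} :=
        measure_mono hsub
    _ = ∏ i', volume (if i' = i then Icc (c - 2*t) (c + 2*t) else Icc (0:ℝ) 1) :=
        vol_pi_set _ (fun i' => by split <;> exact measurableSet_Icc)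
    _ = ENNReal.ofReal (4*t) := by
        rw [Finset.prod_eq_single_of_mem i (Finset.mem_univ i)]
        · rw [if_pos rfl, Real.volume_Icc]
          congr 1
          ring
        · intro b _ hb
          rw [if_neg hb, Real.volume_Icc]
          norm_num

lemma vol_cube_bad (m : ℕ) {t : ℝ} (ht : 0 ≤ t) :
    volume (cube dx ∩ badSet m t) ≤ (dx * (m+1)) * ENNReal.ofReal (4*t) := by
  have hsub : cube dx ∩ badSet m t =
      ⋃ i ∈ (Finset.univ : Finset (Fin dx)), ⋃ k ∈ Finset.range (m+1),
        (cube dx ∩ slab m t i k) := by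
    rw [badSet]
    ext x
    simp only [mem_inter_iff, Set.mem_iUnion]
    aesop
  rw [hsub]
  calc volume _ ≤ ∑ i : Fin dx, volume (⋃ k ∈ Finset.range (m+1), (cube dx ∩ slab m t i k)) :=
        measure_biUnion_finset_le _ _
    _ ≤ ∑ _i : Fin dx, ∑ _k ∈ Finset.range (m+1), ENNReal.ofReal (4*t) := by
        apply Finset.sum_le_sum
        intro i _
        calc volume (⋃ k ∈ Finset.range (m+1), (cube dx ∩ slab m t i k))
            ≤ ∑ k ∈ Finset.range (m+1), volume (cube dx ∩ slab m t i k) :=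
              measure_biUnion_finset_le _ _
          _ ≤ ∑ _k ∈ Finset.range (m+1), ENNReal.ofReal (4*t) :=
              Finset.sum_le_sum fun k _ => vol_cube_slab m ht i k
    _ = (dx * (m+1)) * ENNReal.ofReal (4*t) := by
        simp [Finset.sum_const, mul_assoc]


lemma lintegral_bound (m : ℕ) (hm : 0 < m) {t : ℝ} (ht : 0 < t) {L p : ℝ} (hL : 0 ≤ L)
    (hp : 1 ≤ p)
    {f : EuclideanSpace ℝ (Fin dx) → ℝ} (hf : LipschitzWith (Real.toNNReal L) f)
    (hrange : ∀ x, f x ∈ Icc (0:ℝ) 1)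
    (hsupp : Function.support f ⊆ cube dx) :
    ∫⁻ x, (‖net m t f x - f x‖₊ : ENNReal) ^ p ∂volume ≤
      ENNReal.ofReal ((L * (Real.sqrt dx / (2*m)))^p) +
        (dx * (m+1)) * ENNReal.ofReal (4*t) := by
  set C := L * (Real.sqrt dx / (2*m)) with hC
  have hC0 : 0 ≤ C := by positivity
  have hp0 : (0:ℝ) < p := lt_of_lt_of_le one_pos hp
  have hpt : ∀ x, (‖net m t f x - f x‖₊ : ENNReal) ^ p ≤
      (cube dx).indicator (fun _ => ENNReal.ofReal (C^p)) x +
      (cube dx ∩ badSet m t).indicator (fun _ => 1) x := by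
    intro x
    by_cases hx : x ∈ cube dx
    · by_cases hb : x ∈ badSet m t
      · calc (‖net m t f x - f x‖₊ : ENNReal) ^ p ≤ 1 := by
              apply ENNReal.rpow_le_one _ hp0.le
              rw [← enorm_eq_nnnorm, Real.enorm_eq_ofReal_abs]
              apply ENNReal.ofReal_le_one.mpr
              have h1 := net_mem m hm ht hrange x
              have h2 := hrange x
              rw [abs_le]
              constructor <;> [linarith [h1.1, h2.2]; linarith [h1.2, h2.1]]
          _ = (cube dx ∩ badSet m t).indicator (fun _ => (1:ENNReal)) x := by
              rw [Set.indicator_of_mem (show x ∈ cube dx ∩ badSet m t from ⟨hx, hb⟩) (fun _ => (1:ENNReal))]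
          _ ≤ _ := le_add_left le_rfl
      · calc (‖net m t f x - f x‖₊ : ENNReal) ^ p ≤ ENNReal.ofReal (C^p) := by
              rw [← enorm_eq_nnnorm, Real.enorm_eq_ofReal_abs, ENNReal.ofReal_rpow_of_nonneg (abs_nonneg _) hp0.le]
              apply ENNReal.ofReal_le_ofReal
              apply Real.rpow_le_rpow (abs_nonneg _) _ hp0.le
              exact net_close m hm ht hL hf hx (not_mem_badSet hb)
          _ = (cube dx).indicator (fun _ => ENNReal.ofReal (C^p)) x := by
              rw [Set.indicator_of_mem hx (fun _ => ENNReal.ofReal (C^p))]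
          _ ≤ _ := le_add_right le_rfl
    · have hfx : f x = 0 := by
        by_contra hfx
        exact hx (hsupp hfx)
      rw [net_zero_outside m ht f hx, hfx, sub_zero]
      simp only [nnnorm_zero, ENNReal.coe_zero]
      rw [ENNReal.zero_rpow_of_pos hp0]
      exact zero_le
  calc ∫⁻ x, (‖net m t f x - f x‖₊ : ENNReal) ^ p ∂volume
      ≤ ∫⁻ x, ((cube dx).indicator (fun _ => ENNReal.ofReal (C^p)) x +
        (cube dx ∩ badSet m t).indicator (fun _ => 1) x) ∂volume := lintegral_mono hpt
    _ = (∫⁻ x, (cube dx).indicator (fun _ => ENNReal.ofReal (C^p)) x ∂volume) +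
        ∫⁻ x, (cube dx ∩ badSet m t).indicator (fun _ => 1) x ∂volume := by
        apply lintegral_add_left
        exact measurable_const.indicator cube_measurable
    _ = ENNReal.ofReal (C^p) * volume (cube dx) + 1 * volume (cube dx ∩ badSet m t) := by
        rw [lintegral_indicator cube_measurable, lintegral_indicator
          (cube_measurable.inter (badSet_measurable m t)), setLIntegral_const, setLIntegral_const]
    _ ≤ ENNReal.ofReal (C^p) + (dx * (m+1)) * ENNReal.ofReal (4*t) := by
        rw [vol_cube, mul_one, one_mul]
        exact add_le_add_right (vol_cube_bad m ht.le) _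


lemma eLpNorm_lt_of_lintegral {g : EuclideanSpace ℝ (Fin dx) → ℝ} {p ε : ℝ}
    (hp : 1 ≤ p) (hε : 0 < ε)
    (h : ∫⁻ x, (‖g x‖₊ : ENNReal) ^ p ∂volume < ENNReal.ofReal (ε ^ p)) :
    eLpNorm g (ENNReal.ofReal p) volume < ENNReal.ofReal ε := by
  have hp0 : (0:ℝ) < p := lt_of_lt_of_le one_pos hp
  have hP0 : ENNReal.ofReal p ≠ 0 := by
    simp only [ne_eq, ENNReal.ofReal_eq_zero, not_le]
    linarith
  have hPt : ENNReal.ofReal p ≠ ⊤ := ENNReal.ofReal_ne_top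
  rw [eLpNorm_eq_lintegral_rpow_enorm_toReal hP0 hPt, ENNReal.toReal_ofReal hp0.le]
  have h2 : ENNReal.ofReal (ε ^ p) = (ENNReal.ofReal ε) ^ p :=
    (ENNReal.ofReal_rpow_of_pos hε).symm
  rw [h2] at h
  have h3 := ENNReal.rpow_lt_rpow h (by positivity : (0:ℝ) < 1/p)
  rwa [← ENNReal.rpow_mul, mul_one_div, div_self hp0.ne', ENNReal.rpow_one] at h3

def idxEquiv (n : ℕ) : Fin (2 * n * dx) ≃ (Fin 2 × Fin n) × Fin dx :=
  finProdFinEquiv.symm.trans (Equiv.prodCongr finProdFinEquiv.symm (Equiv.refl (Fin dx)))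

lemma network_repr (m : ℕ) (t : ℝ) (ht : t ≠ 0) (f : EuclideanSpace ℝ (Fin dx) → ℝ) :
    ∃ (W₁ : Fin (2 * m^dx * dx) → EuclideanSpace ℝ (Fin dx)) (b₁ : Fin (2 * m^dx * dx) → ℝ)
      (W₂ : Fin (m^dx) → Fin (2 * m^dx * dx) → ℝ) (b₂ : Fin (m^dx) → ℝ)
      (a : Fin (m^dx) → ℝ) (c : ℝ),
      ∀ x, net m t f x = c + ∑ j, a j *
        max (b₂ j + ∑ k, W₂ j k * max ((inner ℝ (W₁ k) x : ℝ) + b₁ k) 0) 0 := by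
  set n := m^dx
  set e := (finFunctionFinEquiv : (Fin dx → Fin m) ≃ Fin (m^dx))
  set q := (idxEquiv n : Fin (2 * n * dx) ≃ (Fin 2 × Fin n) × Fin dx)
  refine ⟨fun k => EuclideanSpace.single (q k).2 (if (q k).1.1 = 0 then (1:ℝ) else -1),
    fun k => if (q k).1.1 = 0 then -(((e.symm (q k).1.2 (q k).2 : ℝ) + 1)/m - t)
      else (e.symm (q k).1.2 (q k).2 : ℝ)/m + t,
    fun j k => if (q k).1.2 = j then -(1/t) else 0,
    fun _ => 1,
    fun j => f (ctr m (e.symm j)),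
    0, ?_⟩
  intro x
  rw [zero_add]
  have hinner : ∀ k : Fin (2 * n * dx),
      (inner ℝ (EuclideanSpace.single (q k).2 (if (q k).1.1 = 0 then (1:ℝ) else -1)) x : ℝ)
        = (if (q k).1.1 = 0 then (1:ℝ) else -1) * x (q k).2 := by
    intro k
    rw [EuclideanSpace.inner_single_left]
    simp
  have hmain : ∀ j : Fin n,
      (∑ k, (if (q k).1.2 = j then -(1/t) else 0) *
        max ((inner ℝ (EuclideanSpace.single (q k).2 (if (q k).1.1 = 0 then (1:ℝ) else -1)) x : ℝ)
          + (if (q k).1.1 = 0 then -(((e.symm (q k).1.2 (q k).2 : ℝ) + 1)/m - t)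
            else (e.symm (q k).1.2 (q k).2 : ℝ)/m + t)) 0)
      = -(1/t) * ∑ i, (max (x i - (((e.symm j i : ℝ) + 1)/m - t)) 0 +
          max (((e.symm j i : ℝ))/m + t - x i) 0) := by
    intro j
    have hre := Equiv.sum_comp q.symm (fun k =>
      (if (q k).1.2 = j then -(1/t) else 0) *
        max ((inner ℝ (EuclideanSpace.single (q k).2 (if (q k).1.1 = 0 then (1:ℝ) else -1)) x : ℝ)
          + (if (q k).1.1 = 0 then -(((e.symm (q k).1.2 (q k).2 : ℝ) + 1)/m - t)
            else (e.symm (q k).1.2 (q k).2 : ℝ)/m + t)) 0)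
    rw [← hre]
    simp only [Equiv.apply_symm_apply, EuclideanSpace.inner_single_left, starRingEnd_apply,
      star_trivial, ite_mul, zero_mul]
    rw [Fintype.sum_prod_type]
    dsimp only
    have pull : ∀ z : Fin 2 × Fin n,
        (∑ i : Fin dx, if z.2 = j then
            -(1/t) * max ((if z.1 = 0 then (1:ℝ) * x i else -1 * x i) +
              (if z.1 = 0 then -(((e.symm z.2 i : ℝ) + 1)/m - t)
                else (e.symm z.2 i : ℝ)/m + t)) 0 else 0)
          = if z.2 = j then (∑ i : Fin dx,
            -(1/t) * max ((if z.1 = 0 then (1:ℝ) * x i else -1 * x i) +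
              (if z.1 = 0 then -(((e.symm z.2 i : ℝ) + 1)/m - t)
                else (e.symm z.2 i : ℝ)/m + t)) 0) else 0 := by
      intro z
      split <;> simp
    simp only [pull]
    rw [Fintype.sum_prod_type]
    dsimp only
    simp only [Finset.sum_ite_eq', Finset.mem_univ, if_true]
    rw [Fin.sum_univ_two]
    simp only [reduceIte]
    rw [Finset.mul_sum, ← Finset.sum_add_distrib]
    refine Finset.sum_congr rfl fun i _ => ?_
    rw [if_neg (show (1:Fin 2) ≠ 0 by decide), if_neg (show (1:Fin 2) ≠ 0 by decide)]
    rw [show (1:ℝ) * x i + -(((e.symm j i : ℝ) + 1)/m - t)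
        = x i - (((e.symm j i : ℝ) + 1)/m - t) from by ring,
      show (-1:ℝ) * x i + ((e.symm j i : ℝ)/m + t)
        = (e.symm j i : ℝ)/m + t - x i from by ring]
    ring
  have hone : ∀ j : Fin n, (1:ℝ) + -(1/t) * (∑ i, (max (x i - (((e.symm j i : ℝ) + 1)/m - t)) 0 +
      max (((e.symm j i : ℝ))/m + t - x i) 0)) = 1 - (1/t) * (∑ i, (max (x i - (((e.symm j i : ℝ) + 1)/m - t)) 0 +
      max (((e.symm j i : ℝ))/m + t - x i) 0)) := fun j => by ring
  calc net m t f x = ∑ j : Fin n, f (ctr m (e.symm j)) * gb m t (e.symm j) x := by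
        rw [net, ← Equiv.sum_comp e.symm (fun v => f (ctr m v) * gb m t v x)]
    _ = _ := by
        apply Finset.sum_congr rfl
        intro j _
        rw [hmain j, hone j]
        rfl



end ThreeLayerAux

/-- Universal approximation in `L^p` by three-layer ReLU networks: every `L`-Lipschitz
function `f : ℝ^{dx} → [0,1]` supported in `[0,1]^{dx}` can be `ε`-approximated in
`L^p` by a three-layer ReLU network with widths `(2·n·dx, n)` where
`n = O(ε^{-dx})` (explicitly `n ≤ ε^{-dx}·(1 + (√dx·L)^p)^{dx/p} + 1`). -/
theorem three_layer_universal_approximation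
    (dx : ℕ) (hdx : 0 < dx) (L p ε : ℝ) (hL : 0 ≤ L) (hp : 1 ≤ p) (hε : 0 < ε)
    (f : EuclideanSpace ℝ (Fin dx) → ℝ)
    (hf : LipschitzWith (Real.toNNReal L) f)
    (hrange : ∀ x, f x ∈ Set.Icc (0 : ℝ) 1)
    (hsupp : Function.support f ⊆ {x | ∀ i, x i ∈ Set.Icc (0 : ℝ) 1}) :
    ∃ (n : ℕ) (N : EuclideanSpace ℝ (Fin dx) → ℝ)
      (W₁ : Fin (2 * n * dx) → EuclideanSpace ℝ (Fin dx)) (b₁ : Fin (2 * n * dx) → ℝ)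
      (W₂ : Fin n → Fin (2 * n * dx) → ℝ) (b₂ : Fin n → ℝ)
      (a : Fin n → ℝ) (c : ℝ),
      (n : ℝ) ≤ ε ^ (-(dx : ℝ)) * (1 + (Real.sqrt dx * L) ^ p) ^ ((dx : ℝ) / p) + 1 ∧
      (∀ x, N x = c + ∑ j, a j *
        max (b₂ j + ∑ k, W₂ j k * max ((inner ℝ (W₁ k) x : ℝ) + b₁ k) 0) 0) ∧
      eLpNorm (fun x => N x - f x) (ENNReal.ofReal p) volume < ENNReal.ofReal ε := by
  classical
  have hp0 : (0:ℝ) < p := lt_of_lt_of_le one_pos hp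
  have hsupp' : Function.support f ⊆ ThreeLayerAux.cube dx := hsupp
  by_cases hε1 : 1 < ε
  · -- trivial zero network
    refine ⟨0, (fun _ => 0), (fun _ => 0), (fun _ => 0), (fun _ _ => 0), (fun _ => 0),
      (fun _ => 0), 0, ?_, ?_, ?_⟩
    · simp only [Nat.cast_zero]
      have h1 : (0:ℝ) ≤ ε ^ (-(dx : ℝ)) := Real.rpow_nonneg hε.le _
      have h2 : (0:ℝ) ≤ (1 + (Real.sqrt dx * L) ^ p) ^ ((dx : ℝ) / p) :=
        Real.rpow_nonneg (by positivity) _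
      nlinarith
    · intro x; simp
    · apply ThreeLayerAux.eLpNorm_lt_of_lintegral hp hε
      have hpt : ∀ x, (‖(fun x => (0:ℝ) - f x) x‖₊ : ENNReal) ^ p ≤
          (ThreeLayerAux.cube dx).indicator (fun _ => (1:ENNReal)) x := by
        intro x
        by_cases hx : x ∈ ThreeLayerAux.cube dx
        · rw [Set.indicator_of_mem hx (fun _ => (1:ENNReal))]
          apply ENNReal.rpow_le_one _ hp0.le
          simp only [zero_sub]
          rw [← enorm_eq_nnnorm, Real.enorm_eq_ofReal_abs]
          apply ENNReal.ofReal_le_one.mpr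
          have h2 := hrange x
          rw [abs_neg, abs_le]
          constructor <;> linarith [h2.1, h2.2]
        · have hfx : f x = 0 := by
            by_contra hfx
            exact hx (hsupp' hfx)
          simp only [hfx, sub_zero, sub_self, nnnorm_zero, ENNReal.coe_zero]
          rw [ENNReal.zero_rpow_of_pos hp0]
          exact zero_le
      calc ∫⁻ x, (‖(fun x => (0:ℝ) - f x) x‖₊ : ENNReal) ^ p ∂volume
          ≤ ∫⁻ x, (ThreeLayerAux.cube dx).indicator (fun _ => (1:ENNReal)) x ∂volume :=
            lintegral_mono hpt
        _ = 1 * volume (ThreeLayerAux.cube dx) := by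
            rw [lintegral_indicator ThreeLayerAux.cube_measurable, setLIntegral_const]
        _ = 1 := by rw [ThreeLayerAux.vol_cube, mul_one]
        _ < ENNReal.ofReal (ε ^ p) := by
            rw [show (1:ENNReal) = ENNReal.ofReal 1 from ENNReal.ofReal_one.symm]
            rw [ENNReal.ofReal_lt_ofReal_iff (by positivity)]
            have := Real.rpow_le_rpow_of_exponent_le hε1.le hp
            rw [Real.rpow_one] at this
            linarith
  · push_neg at hε1
    set A := Real.sqrt dx * L with hA
    have hA0 : 0 ≤ A := mul_nonneg (Real.sqrt_nonneg _) hL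
    set m : ℕ := ⌊A / (2*ε)⌋₊ + 1 with hmdef
    have hm0 : 0 < m := Nat.succ_pos _
    have hmR : (0:ℝ) < m := by exact_mod_cast hm0
    -- key quantitative bounds
    have hkey : ε * m ≤ (1 + A^p)^(1/p) := by
      have hbase : (0:ℝ) ≤ 1 + A^p := by positivity
      by_cases hk : ⌊A / (2*ε)⌋₊ = 0
      · have hm1 : (m:ℝ) = 1 := by rw [hmdef, hk]; norm_num
        rw [hm1, mul_one]
        have h1 : (1:ℝ) = 1 ^ (1/p) := (Real.one_rpow _).symm
        calc ε ≤ 1 := hε1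
          _ = 1 ^ (1/p) := h1
          _ ≤ (1 + A^p)^(1/p) := by
              apply Real.rpow_le_rpow one_pos.le (by nlinarith [Real.rpow_nonneg hA0 p])
                (by positivity)
      · have hk1 : (1:ℝ) ≤ (⌊A / (2*ε)⌋₊ : ℝ) := by
          have := Nat.one_le_iff_ne_zero.mpr hk
          exact_mod_cast this
        have hfl : (⌊A / (2*ε)⌋₊ : ℝ) ≤ A / (2*ε) := Nat.floor_le (by positivity)
        have hmA : (m:ℝ) ≤ A / ε := by
          have hmc : (m:ℝ) = (⌊A / (2*ε)⌋₊ : ℝ) + 1 := by rw [hmdef]; push_cast; ring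
          have h2d : 2 * (A / (2*ε)) = A / ε := by field_simp
          nlinarith
        have hεm : ε * m ≤ A := by
          have : ε * (A / ε) = A := by field_simp
          nlinarith
        calc ε * m ≤ A := hεm
          _ = (A^p)^(1/p) := by
              rw [← Real.rpow_mul hA0, mul_one_div, div_self hp0.ne', Real.rpow_one]
          _ ≤ (1 + A^p)^(1/p) := by
              apply Real.rpow_le_rpow (Real.rpow_nonneg hA0 p) (by linarith) (by positivity)
    have hmX : (m:ℝ) ≤ ε⁻¹ * (1 + A^p)^(1/p) := by
      calc (m:ℝ) = ε⁻¹ * (ε * m) := by field_simp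
        _ ≤ ε⁻¹ * (1 + A^p)^(1/p) :=
            mul_le_mul_of_nonneg_left hkey (inv_nonneg.mpr hε.le)
    have hbound : ((m^dx : ℕ) : ℝ) ≤ ε ^ (-(dx : ℝ)) * (1 + A ^ p) ^ ((dx : ℝ) / p) + 1 := by
      have hpow : ((m:ℝ))^dx ≤ (ε⁻¹ * (1 + A^p)^(1/p))^dx :=
        pow_le_pow_left₀ (Nat.cast_nonneg m) hmX dx
      have heq : (ε⁻¹ * (1 + A^p)^(1/p))^(dx:ℕ)
          = ε ^ (-(dx : ℝ)) * (1 + A ^ p) ^ ((dx : ℝ) / p) := by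
        rw [mul_pow]
        congr 1
        · rw [Real.rpow_neg hε.le, Real.rpow_natCast, inv_pow]
        · rw [← Real.rpow_natCast ((1 + A^p)^(1/p)) dx,
            ← Real.rpow_mul (by positivity : (0:ℝ) ≤ 1 + A^p), one_div, inv_mul_eq_div]
      rw [heq] at hpow
      rw [Nat.cast_pow]
      linarith
    -- the side length is small enough
    have hside : L * (Real.sqrt dx / (2*m)) < ε := by
      have h1 : A / (2*ε) < m := by
        have := Nat.lt_floor_add_one (A / (2*ε))
        rw [hmdef]
        push_cast
        linarith
      have h2 : A < 2 * ε * m := by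
        rw [div_lt_iff₀ (by positivity)] at h1
        nlinarith
      have h3 : L * (Real.sqrt dx / (2*m)) = A / (2*m) := by rw [hA]; ring
      rw [h3, div_lt_iff₀ (by positivity)]
      nlinarith
    set C := L * (Real.sqrt dx / (2*m)) with hC
    have hC0 : 0 ≤ C := by positivity
    have hCp : C^p < ε^p := Real.rpow_lt_rpow hC0 hside hp0
    set η := ε^p - C^p with hη
    have hη0 : 0 < η := by rw [hη]; linarith
    set D := (dx:ℝ) * ((m:ℝ) + 1) with hD
    have hD0 : 0 < D := by
      apply mul_pos
      · exact_mod_cast hdx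
      · positivity
    set t := η / (8 * D) with htdef
    have ht : 0 < t := by positivity
    obtain ⟨W₁, b₁, W₂, b₂, a, c, hrep⟩ := ThreeLayerAux.network_repr m t ht.ne' f
    refine ⟨m^dx, ThreeLayerAux.net m t f, W₁, b₁, W₂, b₂, a, c, hbound, hrep, ?_⟩
    apply ThreeLayerAux.eLpNorm_lt_of_lintegral hp hε
    have hlint := ThreeLayerAux.lintegral_bound m hm0 ht hL hp hf hrange hsupp'
    apply lt_of_le_of_lt hlint
    have hcast : ((dx:ENNReal) * ((m:ENNReal) + 1)) * ENNReal.ofReal (4*t)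
        = ENNReal.ofReal (D * (4*t)) := by
      rw [show ((m:ENNReal) + 1) = ((m+1 : ℕ) : ENNReal) by push_cast; ring,
        ← ENNReal.ofReal_natCast dx, ← ENNReal.ofReal_natCast (m+1),
        ← ENNReal.ofReal_mul (Nat.cast_nonneg dx),
        ← ENNReal.ofReal_mul (by positivity), hD]
      congr 1
      push_cast
      ring
    rw [hcast, ← ENNReal.ofReal_add (by positivity) (by positivity),
      ENNReal.ofReal_lt_ofReal_iff (by positivity)]
    have hDt : D * (4*t) = η / 2 := by
      rw [htdef]
      field_simp
      ring
    rw [hDt, hη]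
    linarith
end

section
/- Let X₊ be the union of k pairwise disjoint d-simplices in ℝᵈ, each having positive distance from a closed set X₋. Then there exists a three-layer ReLU network with first hidden width at most k(d+1) and second hidden width k that is strictly positive on X₊ and strictly negative on X₋. -/
open Set Metric

lemma aux_lb {d : ℕ} (b : AffineBasis (Fin (d + 1)) ℝ (EuclideanSpace ℝ (Fin d)))
    (Xm : Set (EuclideanSpace ℝ (Fin d))) (hXm : IsClosed Xm)
    (hdisj : ∀ x ∈ Xm, x ∉ convexHull ℝ (Set.range ⇑b)) :
    ∃ c > 0, ∀ x ∈ Xm, c ≤ ∑ j, max (-(b.coord j x)) 0 := by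
  classical
  have hcoordCont : ∀ j : Fin (d + 1), Continuous fun x => b.coord j x := fun j =>
    (b.coord j).continuous_of_finiteDimensional
  set g : EuclideanSpace ℝ (Fin d) → ℝ := fun x => ∑ j, max (-(b.coord j x)) 0 with hgdef
  have hgc : Continuous g :=
    continuous_finset_sum _ fun j _ => ((hcoordCont j).neg.max continuous_const)
  have hterm : ∀ x j, max (-(b.coord j x)) 0 ≤ g x := fun x j =>
    Finset.single_le_sum (f := fun l => max (-(b.coord l x)) 0) (fun l _ => le_max_right _ _) (Finset.mem_univ j)
  have hgposXm : ∀ x ∈ Xm, 0 < g x := by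
    intro x hx
    obtain ⟨j, hj⟩ : ∃ j, b.coord j x < 0 := by
      by_contra h
      push_neg at h
      exact hdisj x hx (by rw [b.convexHull_eq_nonneg_coord]; exact h)
    have h1 : (0 : ℝ) < max (-(b.coord j x)) 0 := lt_max_iff.mpr (Or.inl (by linarith))
    exact h1.trans_le (hterm x j)
  set T : Set (EuclideanSpace ℝ (Fin d)) := {x | ∀ j, -1 ≤ b.coord j x} with hTdef
  have hTclosed : IsClosed T := by
    have : T = ⋂ j, {x | -1 ≤ b.coord j x} := by ext x; simp [hTdef, Set.mem_iInter]
    rw [this]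
    exact isClosed_iInter fun j => isClosed_le continuous_const (hcoordCont j)
  set Δ : Set (Fin (d + 1) → ℝ) :=
    Set.Icc (fun _ => (-1 : ℝ)) (fun _ => (d + 1 : ℝ)) ∩ {w | ∑ j, w j = 1} with hΔdef
  have hΔc : IsCompact Δ :=
    isCompact_Icc.inter_right
      (isClosed_eq (continuous_finset_sum _ fun j _ => continuous_apply j) continuous_const)
  set f : (Fin (d + 1) → ℝ) → EuclideanSpace ℝ (Fin d) := fun w => ∑ j, w j • b j with hfdef
  have hfc : Continuous f :=
    continuous_finset_sum _ fun j _ => (continuous_apply j).smul continuous_const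
  have hTsub : T ⊆ f '' Δ := by
    intro x hx
    have hub : ∀ j, b.coord j x ≤ d + 1 := by
      intro j
      have hsum := b.sum_coord_apply_eq_one x
      have h1 : ∑ l ∈ Finset.univ.erase j, b.coord l x = 1 - b.coord j x := by
        rw [Finset.sum_erase_eq_sub (Finset.mem_univ j), hsum]
      have h2 := Finset.card_nsmul_le_sum (Finset.univ.erase j)
        (fun l => b.coord l x) (-1) (fun l _ => hx l)
      rw [h1] at h2
      have hcard : (Finset.univ.erase j).card = d := by simp
      rw [hcard] at h2
      have : -(d : ℝ) ≤ 1 - b.coord j x := by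
        have := h2
        simpa [nsmul_eq_mul] using this
      linarith
    refine ⟨fun j => b.coord j x, ⟨⟨fun j => hx j, fun j => hub j⟩,
      b.sum_coord_apply_eq_one x⟩, b.linear_combination_coord_eq_self x⟩
  have hK : IsCompact (Xm ∩ T) :=
    (hΔc.image hfc).of_isClosed_subset (hXm.inter hTclosed) fun x hx => hTsub hx.2
  rcases (Xm ∩ T).eq_empty_or_nonempty with hemp | hne
  · refine ⟨1, one_pos, fun x hx => ?_⟩
    have hxT : x ∉ T := fun hT => by
      have : x ∈ Xm ∩ T := ⟨hx, hT⟩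
      rw [hemp] at this
      exact this
    obtain ⟨j, hj⟩ : ∃ j, b.coord j x < -1 := by
      simpa [hTdef, not_forall, not_le] using hxT
    exact (le_max_of_le_left (by linarith)).trans (hterm x j)
  · obtain ⟨z, hzK, hzmin⟩ := hK.exists_isMinOn hne hgc.continuousOn
    refine ⟨min (g z) 1, lt_min (hgposXm z hzK.1) one_pos, fun x hx => ?_⟩
    by_cases hxT : x ∈ T
    · exact (min_le_left _ _).trans (isMinOn_iff.mp hzmin x ⟨hx, hxT⟩)
    · obtain ⟨j, hj⟩ : ∃ j, b.coord j x < -1 := by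
        simpa [hTdef, not_forall, not_le] using hxT
      exact (min_le_right _ _).trans ((le_max_of_le_left (by linarith)).trans (hterm x j))


/-- If `X₊` is a union of `k` pairwise disjoint `d`-simplices in `ℝ^d`, each at
positive distance from a closed set `X₋`, then there is a three-layer ReLU network
with first hidden width `k·(d+1)` and second hidden width `k` that is strictly
positive on `X₊` and strictly negative on `X₋`. -/
theorem three_layer_network_for_union_of_simplices
    (d k : ℕ)
    (pts : Fin k → Fin (d + 1) → EuclideanSpace ℝ (Fin d))
    (hpts : ∀ i, AffineIndependent ℝ (pts i))
    (S : Fin k → Set (EuclideanSpace ℝ (Fin d)))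
    (hS : ∀ i, S i = convexHull ℝ (Set.range (pts i)))
    (hSdisj : Pairwise fun i j => Disjoint (S i) (S j))
    (Xp Xm : Set (EuclideanSpace ℝ (Fin d)))
    (hXp : Xp = ⋃ i, S i)
    (hXm : IsClosed Xm)
    (ε : ℝ) (hε : 0 < ε)
    (hsep : ∀ i, ∀ x ∈ Xm, ∀ y ∈ S i, ε ≤ dist x y) :
    ∃ (N : EuclideanSpace ℝ (Fin d) → ℝ)
      (W₁ : Fin (k * (d + 1)) → EuclideanSpace ℝ (Fin d)) (b₁ : Fin (k * (d + 1)) → ℝ)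
      (W₂ : Fin k → Fin (k * (d + 1)) → ℝ) (b₂ : Fin k → ℝ)
      (a : Fin k → ℝ) (c : ℝ),
      (∀ x, N x = c + ∑ j, a j *
        max (b₂ j + ∑ l, W₂ j l * max ((inner ℝ (W₁ l) x : ℝ) + b₁ l) 0) 0) ∧
      (∀ x ∈ Xp, 0 < N x) ∧ (∀ x ∈ Xm, N x < 0) := by
  classical
  have htop : ∀ i, affineSpan ℝ (Set.range (pts i)) = ⊤ := fun i =>
    (hpts i).affineSpan_eq_top_iff_card_eq_finrank_add_one.mpr
      (by simp [finrank_euclideanSpace_fin])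
  let b : ∀ _ : Fin k, AffineBasis (Fin (d + 1)) ℝ (EuclideanSpace ℝ (Fin d)) :=
    fun i => ⟨pts i, hpts i, htop i⟩
  have hbcoe : ∀ i, ⇑(b i) = pts i := fun i => rfl
  have hScoord : ∀ i, S i = {x | ∀ j, 0 ≤ (b i).coord j x} := by
    intro i
    rw [hS i, ← hbcoe i, (b i).convexHull_eq_nonneg_coord]
  have hnot : ∀ i, ∀ x ∈ Xm, x ∉ S i := by
    intro i x hx hxS
    have := hsep i x hx x hxS
    simp at this
    linarith
  have hmain : ∀ i, ∃ c > 0, ∀ x ∈ Xm, c ≤ ∑ j, max (-((b i).coord j x)) 0 := by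
    intro i
    exact aux_lb (b i) Xm hXm (fun x hx hmem => hnot i x hx (by
      rw [hS i, ← hbcoe i]; exact hmem))
  choose c₀ hc₀pos hc₀ using hmain
  set e : Fin k × Fin (d + 1) ≃ Fin (k * (d + 1)) := finProdFinEquiv with hedef
  set v : Fin k → Fin (d + 1) → EuclideanSpace ℝ (Fin d) := fun i j =>
    (InnerProductSpace.toDual ℝ (EuclideanSpace ℝ (Fin d))).symm
      (LinearMap.toContinuousLinearMap (-((b i).coord j).linear)) with hvdef
  set W₁ : Fin (k * (d + 1)) → EuclideanSpace ℝ (Fin d) :=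
    fun l => v (e.symm l).1 (e.symm l).2 with hW₁def
  set b₁ : Fin (k * (d + 1)) → ℝ :=
    fun l => -(((b (e.symm l).1).coord (e.symm l).2) 0) with hb₁def
  set W₂ : Fin k → Fin (k * (d + 1)) → ℝ :=
    fun j l => if (e.symm l).1 = j then -(2 / c₀ j) else 0 with hW₂def
  -- evaluation of first layer neurons
  have hrelu : ∀ i j x, max ((inner ℝ (v i j) x : ℝ) + -(((b i).coord j) 0)) 0
      = max (-((b i).coord j x)) 0 := by
    intro i j x
    have h1 : (inner ℝ (v i j) x : ℝ) = -(((b i).coord j).linear x) := by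
      rw [hvdef]
      simp [InnerProductSpace.toDual_symm_apply]
    have h2 : ((b i).coord j) x = ((b i).coord j).linear x + ((b i).coord j) 0 := by
      simpa using ((b i).coord j).map_vadd 0 x
    rw [h1]
    congr 1
    linarith
  -- second layer sums
  have hsum : ∀ j x, ∑ l, W₂ j l * max ((inner ℝ (W₁ l) x : ℝ) + b₁ l) 0
      = -(2 / c₀ j) * ∑ m, max (-((b j).coord m x)) 0 := by
    intro j x
    rw [← Equiv.sum_comp e (fun l => W₂ j l * max ((inner ℝ (W₁ l) x : ℝ) + b₁ l) 0)]
    rw [Fintype.sum_prod_type]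
    have heval : ∀ (i : Fin k) (m : Fin (d + 1)),
        W₂ j (e (i, m)) * max ((inner ℝ (W₁ (e (i, m))) x : ℝ) + b₁ (e (i, m))) 0
        = if i = j then -(2 / c₀ j) * max (-((b i).coord m x)) 0 else 0 := by
      intro i m
      simp only [hW₂def, hW₁def, hb₁def]
      rw [Equiv.symm_apply_apply]
      by_cases h : i = j
      · subst h
        rw [if_pos rfl, if_pos rfl]
        rw [show ((i, m) : Fin k × Fin (d+1)).1 = i from rfl,
            show ((i, m) : Fin k × Fin (d+1)).2 = m from rfl, hrelu]
      · rw [if_neg h, if_neg h, zero_mul]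
    simp_rw [heval]
    rw [Finset.sum_comm]
    simp [Finset.sum_ite_eq, Finset.mul_sum]
  refine ⟨fun x => -(1/2) + ∑ j, (1:ℝ) *
      max ((1:ℝ) + ∑ l, W₂ j l * max ((inner ℝ (W₁ l) x : ℝ) + b₁ l) 0) 0,
    W₁, b₁, W₂, fun _ => 1, fun _ => 1, -(1/2), fun _ => rfl, ?_, ?_⟩
  · -- positive on Xp
    intro x hx
    rw [hXp] at hx
    obtain ⟨i₀, hi₀⟩ : ∃ i, x ∈ S i := by simpa using hx
    have hcoords : ∀ m, 0 ≤ (b i₀).coord m x := by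
      rw [hScoord i₀] at hi₀; exact hi₀
    have hg0 : ∑ m, max (-((b i₀).coord m x)) 0 = 0 := by
      apply Finset.sum_eq_zero
      intro m _
      have := hcoords m
      rw [max_eq_right]
      linarith
    have hterm_i₀ : max ((1:ℝ) + ∑ l, W₂ i₀ l * max ((inner ℝ (W₁ l) x : ℝ) + b₁ l) 0) 0 = 1 := by
      rw [hsum i₀ x, hg0]
      norm_num
    have hone : (1:ℝ) ≤ ∑ j, (1:ℝ) *
        max ((1:ℝ) + ∑ l, W₂ j l * max ((inner ℝ (W₁ l) x : ℝ) + b₁ l) 0) 0 := by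
      calc (1:ℝ) = 1 * max ((1:ℝ) + ∑ l, W₂ i₀ l * max ((inner ℝ (W₁ l) x : ℝ) + b₁ l) 0) 0 := by
            rw [hterm_i₀]; ring
        _ ≤ _ := Finset.single_le_sum
            (f := fun j => (1:ℝ) *
              max ((1:ℝ) + ∑ l, W₂ j l * max ((inner ℝ (W₁ l) x : ℝ) + b₁ l) 0) 0)
            (fun j _ => mul_nonneg zero_le_one (le_max_right _ _)) (Finset.mem_univ i₀)
    linarith
  · -- negative on Xm
    intro x hx
    have hzero : ∀ j, max ((1:ℝ) + ∑ l, W₂ j l * max ((inner ℝ (W₁ l) x : ℝ) + b₁ l) 0) 0 = 0 := by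
      intro j
      rw [hsum j x]
      have h1 := hc₀ j x hx
      have h2 : (0:ℝ) < c₀ j := hc₀pos j
      have h3 : (2 : ℝ) ≤ (2 / c₀ j) * ∑ m, max (-((b j).coord m x)) 0 := by
        have := mul_le_mul_of_nonneg_left h1 (le_of_lt (div_pos two_pos h2))
        rw [div_mul_cancel₀] at this
        · linarith
        · exact ne_of_gt h2
      rw [max_eq_right]
      linarith
    simp only [hzero, mul_zero, Finset.sum_const_zero]
    norm_num
end
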